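/- Let f: ℝ^P × ℝ^Q × ℝ^d → ℝ, (w, u, x) ↦ f(w, u, x), be continuously differentiable in (w, u); fix M ≥ 1, a training set (x_b, y_b)_{b=1}^B, L: ℝ × ℝ → ℝ continuously differentiable in its first argument, and a scaling constant γ > 0. Define 𝓛_β(w, u_β) = (1/B) Σ_b L(f(w, u_β, x_b), y_b). Suppose w: ℝ → ℝ^P and u_α: ℝ → ℝ^Q (α = 1,…,M) are differentiable and satisfy w'(t) = −(γ/M) Σ_{β=1}^M ∇_w 𝓛_β(w(t), u_β(t)) and u_α'(t) = −∇_{u_α} 𝓛_α(w(t), u_α(t)). Then for every x and every α, d/dt f(w(t), u_α(t), x) = −(1/B) Σ_{b=1}^B Σ_{β=1}^M Θ_{αβ}(x, x_b) · ∂L/∂ŷ (f(w(t), u_β(t), x_b), y_b), where Θ_{αβ}(x, x') = (γ/M) ∇_w f(w, u_α, x) · ∇_w f(w, u_β, x') + δ_{αβ} ∇_{u_α} f(w, u_α, x) · ∇_{u_α} f(w, u_α, x') evaluated at time t. -/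

import Mathlib

open MeasureTheory
open scoped RealInnerProductSpace

lemma inner_gradient_eq {F : Type*} [NormedAddCommGroup F] [InnerProductSpace ℝ F]
    [CompleteSpace F] (g : F → ℝ) (pt v : F) : ⟪gradient g pt, v⟫ = fderiv ℝ g pt v := by
  rw [gradient, InnerProductSpace.toDual_symm_apply]

/-- **Embedded-ensemble output dynamics (Statement 7, equations (9)–(10) of the paper).**
Models `f(w, u_α, x)` share parameters `w` and have individual parameters `u_α`. Under the
gradient flow `w' = −(γ/M) ∑_β ∇_w 𝓛_β(w, u_β)`, `u_α' = −∇_{u_α} 𝓛_α(w, u_α)` with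
`𝓛_β(w, u) = (1/B) ∑_b L(f(w, u, x_b), y_b)`, each model output satisfies
`d/dt f(w(t), u_α(t), x) = −(1/B) ∑_b ∑_β Θ_{αβ}(x, x_b) ∂L/∂yhat(f(w, u_β, x_b), y_b)`,
where `Θ_{αβ}(x,x') = (γ/M) ⟪∇_w f(w,u_α,x), ∇_w f(w,u_β,x')⟫
+ δ_{αβ} ⟪∇_u f(w,u_α,x), ∇_u f(w,u_α,x')⟫`. -/
theorem embedded_ensemble_output_dynamics
    (Pdim Q d B M : ℕ) (hM : 1 ≤ M) (γ : ℝ) (hγ : 0 < γ)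
    (f : EuclideanSpace ℝ (Fin Pdim) → EuclideanSpace ℝ (Fin Q) →
      EuclideanSpace ℝ (Fin d) → ℝ)
    -- `f` is continuously differentiable in `(w, u)` jointly
    (hf : ∀ x, ContDiff ℝ 1
      (fun p : EuclideanSpace ℝ (Fin Pdim) × EuclideanSpace ℝ (Fin Q) => f p.1 p.2 x))
    (X : Fin B → EuclideanSpace ℝ (Fin d)) (Y : Fin B → ℝ)
    (L : ℝ → ℝ → ℝ) (hL : ∀ y, ContDiff ℝ 1 (fun yhat => L yhat y))
    (𝓛 : EuclideanSpace ℝ (Fin Pdim) → EuclideanSpace ℝ (Fin Q) → ℝ)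
    (h𝓛 : ∀ w u, 𝓛 w u = (1 / (B : ℝ)) * ∑ b, L (f w u (X b)) (Y b))
    -- trajectories of the common and individual parameters
    (w : ℝ → EuclideanSpace ℝ (Fin Pdim))
    (uu : Fin M → ℝ → EuclideanSpace ℝ (Fin Q))
    (hw : ∀ t, HasDerivAt w
      (-((γ / (M : ℝ)) • ∑ β, gradient (fun v => 𝓛 v (uu β t)) (w t))) t)
    (hu : ∀ (α : Fin M) (t : ℝ), HasDerivAt (uu α)
      (-gradient (fun v => 𝓛 (w t) v) (uu α t)) t)
    -- the ensemble Neural Tangent Kernel at time `t`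
    (Θ : Fin M → Fin M → EuclideanSpace ℝ (Fin d) → EuclideanSpace ℝ (Fin d) → ℝ → ℝ)
    (hΘ : ∀ α β x x' t, Θ α β x x' t
      = (γ / (M : ℝ))
          * ⟪gradient (fun v => f v (uu α t) x) (w t),
             gradient (fun v => f v (uu β t) x') (w t)⟫
        + (if α = β then (1 : ℝ) else 0)
          * ⟪gradient (fun v => f (w t) v x) (uu α t),
             gradient (fun v => f (w t) v x') (uu α t)⟫) :
    ∀ (x : EuclideanSpace ℝ (Fin d)) (α : Fin M) (t : ℝ),
      HasDerivAt (fun s => f (w s) (uu α s) x)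
        (-(1 / (B : ℝ)) * ∑ b, ∑ β, Θ α β x (X b) t
            * deriv (fun yhat => L yhat (Y b)) (f (w t) (uu β t) (X b))) t := by
  classical
  intro x α t
  let E := EuclideanSpace ℝ (Fin Pdim)
  let F := EuclideanSpace ℝ (Fin Q)
  set w0 := w t with hw0def
  set u0 := uu α t with hu0def
  -- joint fderivs
  set J : EuclideanSpace ℝ (Fin d) → F → (E × F →L[ℝ] ℝ) :=
    fun x' u => fderiv ℝ (fun p : E × F => f p.1 p.2 x') (w0, u) with hJdef
  have hfd : ∀ (x' : EuclideanSpace ℝ (Fin d)) (u : F),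
      HasFDerivAt (fun p : E × F => f p.1 p.2 x') (J x' u) (w0, u) :=
    fun x' u => ((hf x').differentiable one_ne_zero (w0, u)).hasFDerivAt
  -- partial derivatives in w
  have hpartW : ∀ (x' : EuclideanSpace ℝ (Fin d)) (u : F),
      HasFDerivAt (fun v : E => f v u x')
        ((J x' u).comp (ContinuousLinearMap.inl ℝ E F)) w0 := by
    intro x' u
    have h1 : HasFDerivAt (fun v : E => ((v, u) : E × F))
        (ContinuousLinearMap.inl ℝ E F) w0 :=
      (hasFDerivAt_id w0).prodMk (hasFDerivAt_const u w0)
    exact (hfd x' u).comp w0 h1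
  -- partial derivatives in u (base point u0)
  have hpartU : ∀ (x' : EuclideanSpace ℝ (Fin d)),
      HasFDerivAt (fun v : F => f w0 v x')
        ((J x' u0).comp (ContinuousLinearMap.inr ℝ E F)) u0 := by
    intro x'
    have h1 : HasFDerivAt (fun v : F => ((w0, v) : E × F))
        (ContinuousLinearMap.inr ℝ E F) u0 :=
      (hasFDerivAt_const w0 u0).prodMk (hasFDerivAt_id u0)
    exact (hfd x' u0).comp u0 h1
  -- inner products with gradients of partial maps
  have hinnerW : ∀ (x' : EuclideanSpace ℝ (Fin d)) (u : F) (h : E),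
      ⟪gradient (fun v => f v u x') w0, h⟫ = J x' u (h, 0) := by
    intro x' u h
    rw [inner_gradient_eq, (hpartW x' u).fderiv]
    simp [ContinuousLinearMap.inl_apply]
    rfl
  have hinnerU : ∀ (x' : EuclideanSpace ℝ (Fin d)) (h : F),
      ⟪gradient (fun v => f w0 v x') u0, h⟫ = J x' u0 (0, h) := by
    intro x' h
    rw [inner_gradient_eq, (hpartU x').fderiv]
    simp [ContinuousLinearMap.inr_apply]
    rfl
  -- derivative of the loss in yhat
  set c : Fin M → Fin B → ℝ :=
    fun β b => deriv (fun yhat => L yhat (Y b)) (f w0 (uu β t) (X b)) with hcdef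
  have hLd : ∀ (b : Fin B) (z : ℝ),
      HasDerivAt (fun yhat => L yhat (Y b)) (deriv (fun yhat => L yhat (Y b)) z) z :=
    fun b z => (((hL (Y b)).differentiable one_ne_zero) z).hasDerivAt
  -- fderiv of 𝓛 in w
  have hLoss_w : ∀ β : Fin M, HasFDerivAt (fun v : E => 𝓛 v (uu β t))
      ((1 / (B : ℝ)) • ∑ b, c β b •
        ((J (X b) (uu β t)).comp (ContinuousLinearMap.inl ℝ E F))) w0 := by
    intro β
    simp only [h𝓛]
    exact HasFDerivAt.const_mul
      (HasFDerivAt.fun_sum (fun b _ =>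
        (hLd b _).comp_hasFDerivAt w0 (hpartW (X b) (uu β t)))) _
  -- fderiv of 𝓛 in u at u0
  have hLoss_u : HasFDerivAt (fun v : F => 𝓛 w0 v)
      ((1 / (B : ℝ)) • ∑ b, c α b •
        ((J (X b) u0).comp (ContinuousLinearMap.inr ℝ E F))) u0 := by
    simp only [h𝓛]
    exact HasFDerivAt.const_mul
      (HasFDerivAt.fun_sum (fun b _ =>
        (hLd b _).comp_hasFDerivAt u0 (hpartU (X b)))) _
  -- inner products with gradients of 𝓛
  have hGw : ∀ (β : Fin M) (h : E),
      ⟪gradient (fun v => 𝓛 v (uu β t)) w0, h⟫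
        = (1 / (B : ℝ)) * ∑ b, c β b * (J (X b) (uu β t)) (h, 0) := by
    intro β h
    rw [inner_gradient_eq, (hLoss_w β).fderiv]
    simp [ContinuousLinearMap.sum_apply, mul_comm, ContinuousLinearMap.inl_apply]
    left; rfl
  have hGu : ∀ (h : F),
      ⟪gradient (fun v => 𝓛 w0 v) u0, h⟫
        = (1 / (B : ℝ)) * ∑ b, c α b * (J (X b) u0) (0, h) := by
    intro h
    rw [inner_gradient_eq, hLoss_u.fderiv]
    simp [ContinuousLinearMap.sum_apply, mul_comm, ContinuousLinearMap.inr_apply]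
    left; rfl
  -- the main chain rule
  have hprod : HasDerivAt (fun s => ((w s, uu α s) : E × F))
      ((-((γ / (M : ℝ)) • ∑ β, gradient (fun v => 𝓛 v (uu β t)) (w t)),
        -gradient (fun v => 𝓛 (w t) v) (uu α t))) t :=
    (hw t).prodMk (hu α t)
  have hmain : HasDerivAt (fun s => f (w s) (uu α s) x)
      (J x u0 ((-((γ / (M : ℝ)) • ∑ β, gradient (fun v => 𝓛 v (uu β t)) (w t)),
        -gradient (fun v => 𝓛 (w t) v) (uu α t)))) t :=
    (hfd x u0).comp_hasDerivAt (l := fun p : E × F => f p.1 p.2 x)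
      (f := fun s => ((w s, uu α s) : E × F)) t hprod
  convert hmain using 1
  -- now the value computation
  set gw : Fin M → EuclideanSpace ℝ (Fin d) → E :=
    fun β x' => gradient (fun v => f v (uu β t) x') w0 with hgwdef
  set gu : EuclideanSpace ℝ (Fin d) → F :=
    fun x' => gradient (fun v => f w0 v x') u0 with hgudef
  have hsplit : ∀ (a : E) (b : F), J x u0 (a, b) = ⟪gw α x, a⟫ + ⟪gu x, b⟫ := by
    intro a b
    have : ((a, b) : E × F) = (a, 0) + (0, b) := by simp
    rw [this, map_add, ← hinnerW x u0 a, ← hinnerU x b]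
  rw [hsplit]
  have e1 : ⟪gw α x, -((γ / (M : ℝ)) • ∑ β, gradient (fun v => 𝓛 v (uu β t)) (w t))⟫
      = -((γ / (M : ℝ)) * ∑ β, (1 / (B : ℝ)) * ∑ b, c β b * ⟪gw β (X b), gw α x⟫) := by
    rw [inner_neg_right, real_inner_smul_right, inner_sum]
    congr 2
    refine Finset.sum_congr rfl (fun β _ => ?_)
    rw [real_inner_comm, ← hw0def, hGw β (gw α x)]
    congr 1
    refine Finset.sum_congr rfl (fun b _ => ?_)
    rw [hinnerW (X b) (uu β t) (gw α x)]
  have e2 : ⟪gu x, -gradient (fun v => 𝓛 (w t) v) (uu α t)⟫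
      = -((1 / (B : ℝ)) * ∑ b, c α b * ⟪gu (X b), gu x⟫) := by
    rw [inner_neg_right, real_inner_comm, ← hw0def, ← hu0def, hGu (gu x)]
    congr 2
    refine Finset.sum_congr rfl (fun b _ => ?_)
    rw [hinnerU (X b) (gu x)]
  rw [e1, e2]
  -- final algebra
  simp only [hΘ, ← hw0def, ← hu0def, ← hgwdef, ← hgudef, ← hcdef, add_mul,
    Finset.sum_add_distrib]
  rw [mul_add]
  congr 1
  · rw [Finset.sum_comm]
    simp only [neg_mul, neg_inj]
    rw [Finset.mul_sum, Finset.mul_sum]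
    refine Finset.sum_congr rfl (fun β _ => ?_)
    rw [Finset.mul_sum, Finset.mul_sum, Finset.mul_sum]
    refine Finset.sum_congr rfl (fun b _ => ?_)
    rw [real_inner_comm (gw β (X b)) (gw α x)]
    ring
  · simp only [ite_mul, one_mul, zero_mul, Finset.sum_ite_eq, Finset.mem_univ, if_true]
    simp only [neg_mul, neg_inj]
    rw [Finset.mul_sum, Finset.mul_sum]
    refine Finset.sum_congr rfl (fun b _ => ?_)
    rw [real_inner_comm (gu (X b)) (gu x)]
    ring
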